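/- Let L be a PG-lattice and M a faithful multiplication PG-lattice L-module with I_M compact. If Q is a 2-absorbing primary element of M, then (Q:I_M) is a 2-absorbing primary element of L and √(Q:I_M) is a 2-absorbing element of L. -/

import Mathlib

open CompleteLattice

universe u v

/-- A multiplicative lattice: a complete lattice with a commutative, associative
multiplication distributing over arbitrary joins, whose top element is the
multiplicative identity. -/
class MultiplicativeLattice (L : Type u) extends CompleteLattice L, CommMonoid L where
  one_eq_top : (1 : L) = ⊤
  sSup_mul : ∀ (S : Set L) (b : L), sSup S * b = ⨆ a ∈ S, a * b

/-- A lattice module over a multiplicative lattice. -/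
class LatticeModule (L : Type u) [MultiplicativeLattice L] (M : Type v)
    extends CompleteLattice M, SMul L M where
  sSup_smul : ∀ (S : Set L) (A : M), (SupSet.sSup S : L) • A = ⨆ a ∈ S, a • A
  smul_sSup : ∀ (a : L) (S : Set M), a • sSup S = ⨆ B ∈ S, a • B
  mul_smul : ∀ (a b : L) (A : M), (a * b) • A = a • b • A
  one_smul : ∀ A : M, (1 : L) • A = A
  bot_smul : ∀ A : M, (⊥ : L) • A = (⊥ : M)

section LatticeDefs

variable {L : Type u} [MultiplicativeLattice L]

/-- The residual `(a : b)` in `L`. -/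
def lColon (a b : L) : L := sSup {x : L | x * b ≤ a}

/-- The radical `√a` of an element of `L`. -/
def radL (a : L) : L :=
  sSup {x : L | IsCompactElement x ∧ ∃ n : ℕ, 1 ≤ n ∧ x ^ n ≤ a}

/-- A principal element of a multiplicative lattice (meet principal and join principal). -/
def IsPrincipalElemL (e : L) : Prop :=
  (∀ a b : L, a ⊓ b * e = (lColon a e ⊓ b) * e) ∧
  (∀ a b : L, lColon (a * e ⊔ b) e = lColon b e ⊔ a)

/-- An expansion function on `L`. -/
def IsExpansionL (δ : L → L) : Prop :=
  (∀ a : L, a ≤ δ a) ∧ ∀ a b : L, a ≤ b → δ a ≤ δ b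

/-- A 2-absorbing element of `L`. -/
def Is2AbsorbingL (q : L) : Prop :=
  q < ⊤ ∧ ∀ a b c : L, a * b * c ≤ q → a * b ≤ q ∨ b * c ≤ q ∨ c * a ≤ q

/-- A 2-absorbing primary element of `L`. -/
def Is2AbsorbingPrimaryL (q : L) : Prop :=
  q < ⊤ ∧ ∀ a b c : L, a * b * c ≤ q → a * b ≤ q ∨ b * c ≤ radL q ∨ c * a ≤ radL q

/-- A `δL`-primary element of `L`. -/
def IsDeltaLPrimaryL (δL : L → L) (p : L) : Prop :=
  p < ⊤ ∧ ∀ a b : L, a * b ≤ p → a ≤ p ∨ b ≤ δL p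

end LatticeDefs

/-- `L` is a PG-lattice: every element is a join of principal elements. -/
def IsPGLattice (L : Type u) [MultiplicativeLattice L] : Prop :=
  ∀ a : L, a = sSup {e : L | IsPrincipalElemL e ∧ e ≤ a}

section ModuleDefs

variable (L : Type u) {M : Type v} [MultiplicativeLattice L] [LatticeModule L M]

/-- The element `(A : B)` of `L`, for `A B : M`. -/
def mColon (A B : M) : L := sSup {x : L | x • B ≤ A}

/-- The element `(N : a)` of `M`, for `N : M`, `a : L`. -/
def resColon (N : M) (a : L) : M := sSup {X : M | a • X ≤ N}

/-- An expansion function on the `L`-module `M`. -/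
def IsExpansionM (δ : M → M) : Prop :=
  (∀ A : M, A ≤ δ A) ∧ ∀ A B : M, A ≤ B → δ A ≤ δ B

/-- A `δ`-primary element of the `L`-module `M`. -/
def IsDeltaPrimaryM (δ : M → M) (P : M) : Prop :=
  P < ⊤ ∧ ∀ (a : L) (A : M), a • A ≤ P → A ≤ P ∨ a • (⊤ : M) ≤ δ P

/-- A prime element of the `L`-module `M`. -/
def IsPrimeM (P : M) : Prop :=
  P < ⊤ ∧ ∀ (a : L) (A : M), a • A ≤ P → A ≤ P ∨ a • (⊤ : M) ≤ P

/-- A primary element of the `L`-module `M`. -/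
def IsPrimaryM (P : M) : Prop :=
  P < ⊤ ∧ ∀ (a : L) (A : M), a • A ≤ P → A ≤ P ∨ ∃ n : ℕ, 1 ≤ n ∧ a ^ n • (⊤ : M) ≤ P

/-- A principal element of the `L`-module `M` (meet principal and join principal). -/
def IsPrincipalElemM (N : M) : Prop :=
  (∀ (b : L) (B : M), (b ⊓ mColon L B N) • N = b • N ⊓ B) ∧
  (∀ (b : L) (B : M), b ⊔ mColon L B N = mColon L (b • N ⊔ B) N)

/-- A maximal element of the `L`-module `M`. -/
def IsMaximalM (H : M) : Prop :=
  H < ⊤ ∧ ∀ B : M, H ≤ B → B = H ∨ B = ⊤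

/-- A meet prime element of the `L`-module `M`. -/
def IsMeetPrimeM (N : M) : Prop :=
  N < ⊤ ∧ ∀ A B : M, A ⊓ B ≤ N → A ≤ N ∨ B ≤ N

/-- The expansion function `δ₁` on a multiplication `L`-module `M`:
`δ₁(A) = (√(A : I_M)) I_M`. -/
def delta1 (A : M) : M := radL (mColon L A (⊤ : M)) • (⊤ : M)

/-- The expansion function `δ₂`: meet of all maximal elements above a proper element. -/
noncomputable def delta2 (A : M) : M := by
  classical exact if A = ⊤ then ⊤ else sInf {H : M | A ≤ H ∧ IsMaximalM L H}

/-- A 2-absorbing primary element of the `L`-module `M`. -/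
def Is2AbsorbingPrimaryM (Q : M) : Prop :=
  Q < ⊤ ∧ ∀ (a b : L) (N : M), (a * b) • N ≤ Q →
    a * b ≤ mColon L Q (⊤ : M) ∨
    b • N ≤ radL (mColon L Q (⊤ : M)) • (⊤ : M) ∨
    a • N ≤ radL (mColon L Q (⊤ : M)) • (⊤ : M)

/-- A `δL`-primary element of the `L`-module `M`, for an expansion function `δL` on `L`. -/
def IsDeltaLPrimaryM (δL : L → L) (P : M) : Prop :=
  P < ⊤ ∧ ∀ (a : L) (A : M), a • A ≤ P → A ≤ P ∨ a ≤ δL (mColon L P (⊤ : M))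

end ModuleDefs

/-- `M` is a PG-lattice `L`-module: every element is a join of principal elements. -/
def IsPGModule (L : Type u) (M : Type v) [MultiplicativeLattice L] [LatticeModule L M] : Prop :=
  ∀ N : M, N = sSup {E : M | IsPrincipalElemM L E ∧ E ≤ N}

/-- `M` is a multiplication `L`-module. -/
def IsMultiplicationModule (L : Type u) (M : Type v)
    [MultiplicativeLattice L] [LatticeModule L M] : Prop :=
  ∀ N : M, ∃ a : L, N = a • (⊤ : M)

/-- `M` is a faithful `L`-module: `(O_M : I_M) = 0`. -/
def IsFaithfulModule (L : Type u) (M : Type v)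
    [MultiplicativeLattice L] [LatticeModule L M] : Prop :=
  mColon L (⊥ : M) (⊤ : M) = (⊥ : L)

section HelperL

variable {L : Type u} [MultiplicativeLattice L]

lemma topL_eq_one : (⊤ : L) = 1 := MultiplicativeLattice.one_eq_top.symm

lemma botL_mul (c : L) : (⊥ : L) * c = ⊥ := by
  have h := MultiplicativeLattice.sSup_mul (∅ : Set L) c
  simpa using h

lemma sup_mulL (a b c : L) : (a ⊔ b) * c = a * c ⊔ b * c := by
  have h := MultiplicativeLattice.sSup_mul ({a, b} : Set L) c
  rw [sSup_pair] at h
  rw [h, iSup_pair]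

lemma mulL_mono {a b c d : L} (hab : a ≤ b) (hcd : c ≤ d) : a * c ≤ b * d := by
  have h1 : a * c ≤ b * c := by
    have h := sup_mulL a b c
    rw [sup_eq_right.mpr hab] at h
    rw [h]; exact le_sup_left
  have h2 : b * c ≤ b * d := by
    have h := sup_mulL c d b
    rw [sup_eq_right.mpr hcd] at h
    rw [mul_comm b c, mul_comm b d, h]; exact le_sup_left
  exact h1.trans h2

lemma le_oneL (a : L) : a ≤ 1 := by rw [← topL_eq_one]; exact le_top

lemma mulL_le_left (a b : L) : a * b ≤ a := by
  have := mulL_mono (le_refl a) (le_oneL b)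
  rwa [mul_one] at this

lemma powL_le_powL {x : L} {m i : ℕ} (h : m ≤ i) : x ^ i ≤ x ^ m := by
  obtain ⟨k, rfl⟩ := Nat.exists_eq_add_of_le h
  rw [pow_add]; exact mulL_le_left _ _

lemma powL_base_mono {x y : L} (h : x ≤ y) (n : ℕ) : x ^ n ≤ y ^ n := by
  induction n with
  | zero => simp
  | succ n ih => rw [pow_succ, pow_succ]; exact mulL_mono ih h

lemma finsetSup_mul {β : Type*} (s : Finset β) (f : β → L) (c : L) :
    s.sup f * c = s.sup fun i => f i * c := by
  induction s using Finset.cons_induction with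
  | empty => simpa using botL_mul c
  | cons X t hX ih => rw [Finset.sup_cons, Finset.sup_cons, sup_mulL, ih]

lemma binomL {x y q : L} {m n : ℕ} (hx : x ^ m ≤ q) (hy : y ^ n ≤ q) :
    (x ⊔ y) ^ (m + n) ≤ q := by
  have key : ∀ k : ℕ,
      (x ⊔ y) ^ k ≤ (Finset.range (k + 1)).sup fun i => x ^ i * y ^ (k - i) := by
    intro k
    induction k with
    | zero => simp
    | succ k ih =>
      calc (x ⊔ y) ^ (k + 1) = (x ⊔ y) ^ k * (x ⊔ y) := by rw [pow_succ]
        _ ≤ ((Finset.range (k + 1)).sup fun i => x ^ i * y ^ (k - i)) * (x ⊔ y) :=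
            mulL_mono ih le_rfl
        _ = (Finset.range (k + 1)).sup fun i => (x ^ i * y ^ (k - i)) * (x ⊔ y) :=
            finsetSup_mul _ _ _
        _ ≤ _ := by
            refine Finset.sup_le fun i hi => ?_
            have hik : i ≤ k := by
              have := Finset.mem_range.mp hi; omega
            have hexp : (x ^ i * y ^ (k - i)) * (x ⊔ y)
                = x ^ (i+1) * y ^ (k - i) ⊔ x ^ i * y ^ (k + 1 - i) := by
              rw [mul_comm _ (x ⊔ y), sup_mulL]
              congr 1
              · rw [pow_succ, ← mul_assoc, mul_comm x (x ^ i)]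
              · have h2 : k + 1 - i = (k - i) + 1 := by omega
                rw [h2, pow_succ, mul_comm (y ^ (k - i)) y]
                exact mul_left_comm y (x ^ i) (y ^ (k - i))
            rw [hexp]
            refine sup_le ?_ ?_
            · have hmem : i + 1 ∈ Finset.range (k + 2) := by
                simp; omega
              have h3 : k - i = (k+1) - (i+1) := by omega
              rw [h3]
              exact Finset.le_sup (f := fun j => x ^ j * y ^ (k + 1 - j)) hmem
            · have hmem : i ∈ Finset.range (k + 2) := by simp; omega
              exact Finset.le_sup (f := fun j => x ^ j * y ^ (k + 1 - j)) hmem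
  refine (key (m + n)).trans (Finset.sup_le fun i hi => ?_)
  by_cases him : m ≤ i
  · exact le_trans (le_trans (mulL_le_left _ _) (powL_le_powL him)) hx
  · have hn' : n ≤ m + n - i := by omega
    have h1 : x ^ i * y ^ (m + n - i) ≤ y ^ (m + n - i) := by
      rw [mul_comm]; exact mulL_le_left _ _
    exact h1.trans ((powL_le_powL hn').trans hy)

lemma botCompact {α : Type*} [CompleteLattice α] : IsCompactElement (⊥ : α) := by
  rw [isCompactElement_iff_exists_le_sSup_of_le_sSup]
  intro s _
  exact ⟨∅, by simp⟩

lemma compactSup {α : Type*} [CompleteLattice α] {a b : α}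
    (ha : IsCompactElement a) (hb : IsCompactElement b) : IsCompactElement (a ⊔ b) := by
  rw [isCompactElement_iff_exists_le_sSup_of_le_sSup] at ha hb ⊢
  intro s hs
  obtain ⟨ta, hta, ha'⟩ := ha s (le_trans le_sup_left hs)
  obtain ⟨tb, htb, hb'⟩ := hb s (le_trans le_sup_right hs)
  classical
  refine ⟨ta ∪ tb, ?_, ?_⟩
  · rw [Finset.coe_union]; exact Set.union_subset hta htb
  · rw [Finset.sup_union]; exact sup_le_sup ha' hb'

lemma powL_compact (hmulcpt : ∀ a b : L, IsCompactElement a → IsCompactElement b →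
      IsCompactElement (a * b)) {x : L} (hx : IsCompactElement x) :
    ∀ n : ℕ, 1 ≤ n → IsCompactElement (x ^ n) := by
  intro n hn
  induction n with
  | zero => omega
  | succ n ih =>
    rcases Nat.eq_or_lt_of_le hn with h | h
    · have hn0 : n = 0 := by omega
      subst hn0
      simpa using hx
    · have hn1 : 1 ≤ n := by omega
      rw [pow_succ]
      exact hmulcpt _ _ (ih hn1) hx

lemma compact_le_radL_iff (hmulcpt : ∀ a b : L, IsCompactElement a → IsCompactElement b →
      IsCompactElement (a * b)) {x u : L} (hx : IsCompactElement x) :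
    x ≤ radL u ↔ ∃ n : ℕ, 1 ≤ n ∧ x ^ n ≤ u := by
  constructor
  · intro h
    set S : Set L := {y : L | IsCompactElement y ∧ ∃ n : ℕ, 1 ≤ n ∧ y ^ n ≤ u} with hS
    have hne : S.Nonempty := ⟨⊥, botCompact, 1, le_rfl, by simpa using bot_le⟩
    have hdir : DirectedOn (· ≤ ·) S := by
      rintro p ⟨hpc, m, hm, hpu⟩ r ⟨hrc, n, hn, hru⟩
      exact ⟨p ⊔ r, ⟨compactSup hpc hrc, m + n, by omega, binomL hpu hru⟩,
        le_sup_left, le_sup_right⟩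
    obtain ⟨y, hyS, hxy⟩ :=
      (isCompactElement_iff_le_of_directed_sSup_le L x).mp hx S hne hdir h
    obtain ⟨-, n, hn, hyu⟩ := hyS
    exact ⟨n, hn, le_trans (powL_base_mono hxy n) hyu⟩
  · rintro ⟨n, hn, h⟩
    exact le_sSup ⟨hx, n, hn, h⟩

lemma le_radL [IsCompactlyGenerated L] (a : L) : a ≤ radL a := by
  obtain ⟨s, hs, rfl⟩ := IsCompactlyGenerated.exists_sSup_eq a
  exact sSup_le fun x hx =>
    le_sSup ⟨hs x hx, 1, le_rfl, by simpa using le_sSup hx⟩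

lemma radL_idem (hmulcpt : ∀ a b : L, IsCompactElement a → IsCompactElement b →
      IsCompactElement (a * b)) (a : L) : radL (radL a) ≤ radL a := by
  refine sSup_le ?_
  rintro x ⟨hxc, n, hn, hxn⟩
  obtain ⟨m, hm, h⟩ := (compact_le_radL_iff hmulcpt (powL_compact hmulcpt hxc n hn)).mp hxn
  rw [← pow_mul] at h
  exact le_sSup ⟨hxc, n * m, Nat.mul_pos hn hm, h⟩

lemma sq_le_radL [IsCompactlyGenerated L]
    (hmulcpt : ∀ a b : L, IsCompactElement a → IsCompactElement b →
      IsCompactElement (a * b)) {b u : L} (h : b * b ≤ radL u) : b ≤ radL u := by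
  obtain ⟨s, hs, rfl⟩ := IsCompactlyGenerated.exists_sSup_eq b
  refine sSup_le fun x hx => ?_
  have hxc := hs x hx
  have hxx : x * x ≤ radL u := le_trans (mulL_mono (le_sSup hx) (le_sSup hx)) h
  obtain ⟨n, hn, hpow⟩ := (compact_le_radL_iff hmulcpt (hmulcpt x x hxc hxc)).mp hxx
  refine le_sSup ⟨hxc, 2 * n, by omega, ?_⟩
  rw [pow_mul, pow_two]
  exact hpow

lemma prodL_mono {β : Type*} {t : Finset β} {f g : β → L} (h : ∀ i ∈ t, f i ≤ g i) :
    (∏ i ∈ t, f i) ≤ ∏ i ∈ t, g i := by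
  induction t using Finset.cons_induction with
  | empty => simp
  | cons X t' hX ih =>
    rw [Finset.prod_cons, Finset.prod_cons]
    exact mulL_mono (h X (Finset.mem_cons_self _ _))
      (ih fun i hi => h i (Finset.mem_cons_of_mem hi))

lemma prodL_sup_le {β : Type*} {t : Finset β} (a : L) (z : β → L) :
    (∏ i ∈ t, (a ⊔ z i)) ≤ a ⊔ ∏ i ∈ t, z i := by
  induction t using Finset.cons_induction with
  | empty => simpa using le_sup_right
  | cons X t' hX ih =>
    rw [Finset.prod_cons, Finset.prod_cons]
    calc (a ⊔ z X) * ∏ i ∈ t', (a ⊔ z i) ≤ (a ⊔ z X) * (a ⊔ ∏ i ∈ t', z i) :=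
          mulL_mono le_rfl ih
      _ = a * (a ⊔ ∏ i ∈ t', z i) ⊔ z X * (a ⊔ ∏ i ∈ t', z i) := sup_mulL _ _ _
      _ ≤ a ⊔ z X * ∏ i ∈ t', z i := by
          refine sup_le ((mulL_le_left _ _).trans le_sup_left) ?_
          rw [mul_comm, sup_mulL]
          refine sup_le ((mulL_le_left _ _).trans le_sup_left) ?_
          rw [mul_comm]
          exact le_sup_right

end HelperL
section HelperM

variable {L : Type u} {M : Type v} [MultiplicativeLattice L] [LatticeModule L M]

lemma smul_supM (a : L) (A B : M) : a • (A ⊔ B) = a • A ⊔ a • B := by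
  have h := LatticeModule.smul_sSup a ({A, B} : Set M)
  rw [sSup_pair] at h
  rw [h, iSup_pair]

lemma sup_smulM (a b : L) (A : M) : (a ⊔ b) • A = a • A ⊔ b • A := by
  have h := LatticeModule.sSup_smul ({a, b} : Set L) A
  rw [sSup_pair] at h
  rw [h, iSup_pair]

lemma smul_botM (a : L) : a • (⊥ : M) = ⊥ := by
  have h := LatticeModule.smul_sSup a (∅ : Set M)
  simpa using h

lemma smul_monoM {a b : L} {A B : M} (hab : a ≤ b) (hAB : A ≤ B) : a • A ≤ b • B := by
  have h1 : a • A ≤ b • A := by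
    have h := sup_smulM a b A
    rw [sup_eq_right.mpr hab] at h
    rw [h]; exact le_sup_left
  have h2 : b • A ≤ b • B := by
    have h := smul_supM b A B
    rw [sup_eq_right.mpr hAB] at h
    rw [h]; exact le_sup_left
  exact h1.trans h2

lemma smul_le_selfM (a : L) (A : M) : a • A ≤ A := by
  have h := smul_monoM (le_oneL a) (le_refl A)
  rwa [LatticeModule.one_smul] at h

lemma mColon_smul_le (A B : M) : mColon L A B • B ≤ A := by
  rw [mColon, LatticeModule.sSup_smul]
  exact iSup₂_le fun x hx => hx

lemma le_mColon {x : L} {A B : M} (h : x • B ≤ A) : x ≤ mColon L A B := le_sSup h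

lemma smul_finsetSup_le {c : L} {t : Finset M} {C : M} (h : ∀ X ∈ t, c • X ≤ C) :
    c • t.sup id ≤ C := by
  induction t using Finset.cons_induction with
  | empty =>
    rw [Finset.sup_empty, smul_botM]; exact bot_le
  | cons X t' hX ih =>
    rw [Finset.sup_cons, smul_supM]
    exact sup_le (h X (Finset.mem_cons_self _ _))
      (ih fun Y hY => h Y (Finset.mem_cons_of_mem hY))

/-- The key Nakayama-style lemma: if `b • E ≤ a • (⋁ s)` for every (principal) `E` in the
finite set `s`, then `b ≤ √(a ⊔ (⊥ : Xᵢ))` for each `Xᵢ ∈ s`. -/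
lemma nak_aux [IsCompactlyGenerated L]
    (hmulcpt : ∀ a b : L, IsCompactElement a → IsCompactElement b →
      IsCompactElement (a * b)) :
    ∀ (n : ℕ) (s : Finset M), s.card ≤ n → (∀ E ∈ s, IsPrincipalElemM L E) →
      ∀ a b : L, (∀ E ∈ s, b • E ≤ a • s.sup id) →
      ∀ X ∈ s, b ≤ radL (a ⊔ mColon L (⊥ : M) X) := by
  intro n
  induction n with
  | zero =>
    intro s hcard _ a b _ X hX
    have hs : s = ∅ := Finset.card_eq_zero.mp (Nat.le_zero.mp hcard)
    rw [hs] at hX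
    exact absurd hX (Finset.notMem_empty X)
  | succ n ih =>
    intro s hcard hprin a b hb X hX
    classical
    by_cases hsing : ∀ Y ∈ s, Y = X
    · have hsup : s.sup id = X :=
        le_antisymm (Finset.sup_le fun Y hY => le_of_eq (hsing Y hY))
          (Finset.le_sup (f := id) hX)
      have h1 : b • X ≤ a • X ⊔ (⊥ : M) := by
        rw [sup_bot_eq]
        have := hb X hX
        rwa [hsup] at this
      have h2 : b ≤ mColon L (a • X ⊔ (⊥ : M)) X := le_mColon h1
      rw [← (hprin X hX).2 a (⊥ : M)] at h2
      exact h2.trans (le_radL _)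
    · push_neg at hsing
      obtain ⟨Y, hYs, hYX⟩ := hsing
      set s' := s.erase Y with hs'
      have hXs' : X ∈ s' := Finset.mem_erase.mpr ⟨fun h => hYX h.symm, hX⟩
      have hcard' : s'.card ≤ n := by
        rw [hs', Finset.card_erase_of_mem hYs]; omega
      set N' := s'.sup id with hN'
      have hsupeq : s.sup id = Y ⊔ N' := by
        conv_lhs => rw [← Finset.insert_erase hYs]
        rw [Finset.sup_insert, hN', hs']
        rfl
      set w := mColon L (a • N') Y with hw
      have hwY : w • Y ≤ a • N' := mColon_smul_le _ _
      have hbaw : b ≤ a ⊔ w := by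
        have h1 : b • Y ≤ a • Y ⊔ a • N' := by
          have := hb Y hYs
          rwa [hsupeq, smul_supM] at this
        have h2 : b ≤ mColon L (a • Y ⊔ a • N') Y := le_mColon h1
        rwa [← (hprin Y hYs).2 a (a • N')] at h2
      have hstep : ∀ E ∈ s', (b * w) • E ≤ a • N' := by
        intro E hE
        have hEs : E ∈ s := Finset.mem_of_mem_erase hE
        have h2 : b • E ≤ a • Y ⊔ a • N' := by
          have := hb E hEs
          rwa [hsupeq, smul_supM] at this
        calc (b * w) • E = w • (b • E) := by
              rw [mul_comm, LatticeModule.mul_smul]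
          _ ≤ w • (a • Y ⊔ a • N') := smul_monoM le_rfl h2
          _ = w • (a • Y) ⊔ w • (a • N') := smul_supM _ _ _
          _ ≤ a • N' := by
              refine sup_le ?_ ?_
              · have e1 : w • (a • Y) = a • (w • Y) := by
                  rw [← LatticeModule.mul_smul, mul_comm, LatticeModule.mul_smul]
                rw [e1]
                calc a • (w • Y) ≤ a • (a • N') := smul_monoM le_rfl hwY
                  _ = (a * a) • N' := (LatticeModule.mul_smul a a N').symm
                  _ ≤ a • N' := smul_monoM (mulL_le_left a a) le_rfl
              · calc w • (a • N') ≤ (1 : L) • (a • N') := smul_monoM (le_oneL w) le_rfl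
                  _ = a • N' := LatticeModule.one_smul _
      have hIH : b * w ≤ radL (a ⊔ mColon L (⊥ : M) X) :=
        ih s' hcard' (fun E hE => hprin E (Finset.mem_of_mem_erase hE)) a (b * w) hstep X hXs'
      have hbb : b * b ≤ radL (a ⊔ mColon L (⊥ : M) X) := by
        calc b * b ≤ b * (a ⊔ w) := mulL_mono le_rfl hbaw
          _ = b * a ⊔ b * w := by rw [mul_comm b (a ⊔ w), sup_mulL, mul_comm a b, mul_comm w b]
          _ ≤ radL (a ⊔ mColon L (⊥ : M) X) := by
              refine sup_le ?_ hIH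
              have : b * a ≤ a := by rw [mul_comm]; exact mulL_le_left a b
              exact this.trans (le_sup_left.trans (le_radL _))
      exact sq_le_radL hmulcpt hbb

/-- The cancellation-type lemma: in a faithful PG-lattice module with compact top,
`b • ⊤ ≤ a • ⊤` implies `b ≤ √a`. -/
lemma cancelM [IsCompactlyGenerated L]
    (hmulcpt : ∀ a b : L, IsCompactElement a → IsCompactElement b →
      IsCompactElement (a * b))
    (hPGM : IsPGModule L M) (hfaith : IsFaithfulModule L M)
    (htop : IsCompactElement (⊤ : M)) {a b : L}
    (h : b • (⊤ : M) ≤ a • (⊤ : M)) : b ≤ radL a := by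
  classical
  obtain ⟨t, ht, htsup⟩ := (isCompactElement_iff_exists_le_sSup_of_le_sSup M ⊤).mp htop _ (le_of_eq (hPGM ⊤))
  have htop_eq : (⊤ : M) = t.sup id := le_antisymm htsup le_top
  have hprin : ∀ E ∈ t, IsPrincipalElemM L E := fun E hE => (ht hE).1
  by_cases hte : t = ∅
  · have hbot : (⊤ : M) = ⊥ := by rw [htop_eq, hte, Finset.sup_empty]
    have h1L : (1 : L) ≤ mColon L (⊥ : M) ⊤ :=
      le_mColon (by rw [LatticeModule.one_smul, hbot])
    rw [hfaith] at h1L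
    exact ((le_oneL b).trans h1L).trans bot_le
  · obtain ⟨X₀, hX₀⟩ := Finset.nonempty_of_ne_empty hte
    have hkey : ∀ X ∈ t, b ≤ radL (a ⊔ mColon L (⊥ : M) X) := by
      intro X hXt
      refine nak_aux hmulcpt t.card t le_rfl hprin a b ?_ X hXt
      intro E _
      calc b • E ≤ b • (⊤ : M) := smul_monoM le_rfl le_top
        _ ≤ a • (⊤ : M) := h
        _ = a • t.sup id := by rw [← htop_eq]
    have hz : (∏ X ∈ t, mColon L (⊥ : M) X) ≤ (⊥ : L) := by
      rw [← hfaith]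
      refine le_mColon ?_
      rw [htop_eq]
      refine smul_finsetSup_le ?_
      intro X hXt
      rw [← Finset.mul_prod_erase t _ hXt, LatticeModule.mul_smul]
      calc mColon L (⊥ : M) X • ((∏ Y ∈ t.erase X, mColon L (⊥ : M) Y) • X)
          ≤ mColon L (⊥ : M) X • X := smul_monoM le_rfl (smul_le_selfM _ _)
        _ ≤ ⊥ := mColon_smul_le _ _
    obtain ⟨sb, hsb, rfl⟩ := IsCompactlyGenerated.exists_sSup_eq b
    refine sSup_le fun x hx => ?_
    have hxc := hsb x hx
    have hxX : ∀ X ∈ t, ∃ n : ℕ, 1 ≤ n ∧ x ^ n ≤ a ⊔ mColon L (⊥ : M) X := fun X hXt =>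
      (compact_le_radL_iff hmulcpt hxc).mp (le_trans (le_sSup hx) (hkey X hXt))
    choose! m hm1 hm2 using hxX
    refine le_sSup ⟨hxc, ∑ X ∈ t, m X, ?_, ?_⟩
    · calc 1 ≤ m X₀ := hm1 X₀ hX₀
        _ ≤ ∑ X ∈ t, m X := Finset.single_le_sum (fun i _ => Nat.zero_le _) hX₀
    · have hc : x ^ (∑ X ∈ t, m X) ≤ a ⊔ (⊥ : L) := by
        calc x ^ (∑ X ∈ t, m X) = ∏ X ∈ t, x ^ m X := (Finset.prod_pow_eq_pow_sum _ _ _).symm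
          _ ≤ ∏ X ∈ t, (a ⊔ mColon L (⊥ : M) X) := prodL_mono fun X hXt => hm2 X hXt
          _ ≤ a ⊔ ∏ X ∈ t, mColon L (⊥ : M) X := prodL_sup_le _ _
          _ ≤ a ⊔ (⊥ : L) := sup_le_sup_left hz a
      rwa [sup_bot_eq] at hc

end HelperM
theorem stmt14 {L : Type u} {M : Type v} [MultiplicativeLattice L] [LatticeModule L M]
    [IsCompactlyGenerated L]
    (h1cpt : IsCompactElement (1 : L))
    (hmulcpt : ∀ a b : L, IsCompactElement a → IsCompactElement b → IsCompactElement (a * b))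
    (hPGL : IsPGLattice L) (hPGM : IsPGModule L M)
    (hmult : IsMultiplicationModule L M) (hfaith : IsFaithfulModule L M)
    (htop : IsCompactElement (⊤ : M))
    (Q : M) (hQ : Is2AbsorbingPrimaryM L Q) :
    Is2AbsorbingPrimaryL (mColon L Q (⊤ : M)) ∧
    Is2AbsorbingL (radL (mColon L Q (⊤ : M))) := by
  obtain ⟨hQtop, hQ2⟩ := hQ
  set q := mColon L Q (⊤ : M) with hqdef
  have hq_top : q • (⊤ : M) ≤ Q := mColon_smul_le Q ⊤
  have hqlt : q < ⊤ := by
    refine lt_of_le_of_ne le_top fun hqe => ?_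
    have htQ : (⊤ : M) ≤ Q := by
      calc (⊤ : M) = (1 : L) • (⊤ : M) := (LatticeModule.one_smul _).symm
        _ = q • (⊤ : M) := by rw [hqe, ← topL_eq_one]
        _ ≤ Q := hq_top
    exact hQtop.ne (top_unique htQ)
  have hcancel : ∀ {c : L}, c • (⊤ : M) ≤ radL q • (⊤ : M) → c ≤ radL q := fun {c} hc =>
    (cancelM hmulcpt hPGM hfaith htop hc).trans (radL_idem hmulcpt q)
  have habs : Is2AbsorbingPrimaryL q := by
    refine ⟨hqlt, fun a b c habc => ?_⟩
    have h1 : (a * b) • (c • (⊤ : M)) ≤ Q := by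
      rw [← LatticeModule.mul_smul]
      exact le_trans (smul_monoM habc le_rfl) hq_top
    rcases hQ2 a b (c • (⊤ : M)) h1 with h | h | h
    · exact Or.inl h
    · refine Or.inr (Or.inl (hcancel ?_))
      rw [LatticeModule.mul_smul]
      exact h
    · refine Or.inr (Or.inr (hcancel ?_))
      rw [mul_comm c a, LatticeModule.mul_smul]
      exact h
  refine ⟨habs, ?_⟩
  have hrlt : radL q < ⊤ := by
    refine lt_of_le_of_ne le_top fun hre => ?_
    have h1 : (1 : L) ≤ radL q := by rw [hre]; exact le_top
    obtain ⟨n, hn, hpow⟩ := (compact_le_radL_iff hmulcpt h1cpt).mp h1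
    rw [one_pow] at hpow
    have hq1 : q = ⊤ := top_unique (by rw [topL_eq_one]; exact hpow)
    exact hqlt.ne hq1
  refine ⟨hrlt, fun a b c habc => ?_⟩
  by_contra hcon
  push_neg at hcon
  obtain ⟨hab, hbc, hca⟩ := hcon
  have hex : ∀ {u v : L}, ¬ u * v ≤ radL q →
      ∃ x y : L, IsCompactElement x ∧ IsCompactElement y ∧ x ≤ u ∧ y ≤ v ∧
        ¬ x * y ≤ radL q := by
    intro u v huv
    by_contra hno
    push_neg at hno
    apply huv
    obtain ⟨su, hsu, rfl⟩ := IsCompactlyGenerated.exists_sSup_eq u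
    obtain ⟨sv, hsv, rfl⟩ := IsCompactlyGenerated.exists_sSup_eq v
    rw [MultiplicativeLattice.sSup_mul]
    refine iSup₂_le fun x hx => ?_
    rw [mul_comm, MultiplicativeLattice.sSup_mul]
    refine iSup₂_le fun y hy => ?_
    rw [mul_comm]
    exact hno x y (hsu x hx) (hsv y hy) (le_sSup hx) (le_sSup hy)
  obtain ⟨x0, y0, hx0c, hy0c, hx0a, hy0b, hxy0⟩ := hex hab
  obtain ⟨y1, u1, hy1c, hu1c, hy1b, hu1le, hyu1⟩ := hex hbc
  obtain ⟨u2, x2, hu2c, hx2c, hu2le, hx2a, hux2⟩ := hex hca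
  set X := x0 ⊔ x2 with hX
  set Y := y0 ⊔ y1 with hY
  set U := u1 ⊔ u2 with hU
  have hXc : IsCompactElement X := compactSup hx0c hx2c
  have hYc : IsCompactElement Y := compactSup hy0c hy1c
  have hUc : IsCompactElement U := compactSup hu1c hu2c
  have hXa : X ≤ a := sup_le hx0a hx2a
  have hYb : Y ≤ b := sup_le hy0b hy1b
  have hUcc : U ≤ c := sup_le hu1le hu2le
  have hXYU : X * Y * U ≤ radL q :=
    le_trans (mulL_mono (mulL_mono hXa hYb) hUcc) habc
  have hXYUc : IsCompactElement (X * Y * U) := hmulcpt _ _ (hmulcpt _ _ hXc hYc) hUc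
  obtain ⟨n, hn, hpow⟩ := (compact_le_radL_iff hmulcpt hXYUc).mp hXYU
  rw [mul_pow, mul_pow] at hpow
  rcases habs.2 (X ^ n) (Y ^ n) (U ^ n) hpow with h | h | h
  · rw [← mul_pow] at h
    refine hxy0 (le_trans (mulL_mono (le_sup_left : x0 ≤ X) (le_sup_left : y0 ≤ Y)) ?_)
    exact le_sSup ⟨hmulcpt _ _ hXc hYc, n, hn, h⟩
  · rw [← mul_pow] at h
    obtain ⟨k, hk, h2⟩ :=
      (compact_le_radL_iff hmulcpt (powL_compact hmulcpt (hmulcpt _ _ hYc hUc) n hn)).mp h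
    rw [← pow_mul] at h2
    refine hyu1 (le_trans (mulL_mono (le_sup_right : y1 ≤ Y) (le_sup_left : u1 ≤ U)) ?_)
    exact le_sSup ⟨hmulcpt _ _ hYc hUc, n * k, Nat.mul_pos hn hk, h2⟩
  · rw [← mul_pow] at h
    obtain ⟨k, hk, h2⟩ :=
      (compact_le_radL_iff hmulcpt (powL_compact hmulcpt (hmulcpt _ _ hUc hXc) n hn)).mp h
    rw [← pow_mul] at h2
    refine hux2 (le_trans (mulL_mono (le_sup_right : u2 ≤ U) (le_sup_right : x2 ≤ X)) ?_)
    exact le_sSup ⟨hmulcpt _ _ hUc hXc, n * k, Nat.mul_pos hn hk, h2⟩
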